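/- For the left-invariant Riemannian structure on a Lie group given by an inner product ⟨·,·⟩ on the Lie algebra 𝔤 = 𝔥 ⊕ 𝔨 with 𝔥 ⊥ 𝔨, if the inner product is ad(𝔨)-invariant (⟨[k,x],y⟩ = −⟨x,[k,y]⟩ for all k ∈ 𝔨) and u: I → 𝔤 satisfies the Euler–Arnold equation ⟨u̇, x⟩ = ⟨u, [u, x]⟩ for all x ∈ 𝔤, then λ(t) = pr_𝔨 u(t) is constant, where pr_𝔨 is the orthogonal projection onto 𝔨. -/

import Mathlib

open scoped InnerProductSpace

/-- For an Euler–Arnold solution with an `ad(𝔨)`-invariant inner product, the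
`𝔨`-component of `u` is constant. -/
theorem euler_arnold_k_component_constant
    {V : Type*} [NormedAddCommGroup V] [InnerProductSpace ℝ V]
    (bracket : V → V → V)
    (hskew : ∀ x y : V, bracket x y = -bracket y x)
    (𝔨 : Submodule ℝ V) [CompleteSpace ↥𝔨]
    (hinv : ∀ k ∈ 𝔨, ∀ x y : V, ⟪bracket k x, y⟫_ℝ = -⟪x, bracket k y⟫_ℝ)
    (u : ℝ → V) (hu : Differentiable ℝ u)
    (heuler : ∀ t : ℝ, ∀ x : V, ⟪deriv u t, x⟫_ℝ = ⟪u t, bracket (u t) x⟫_ℝ) :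
    ∀ t ∈ Set.Icc (0:ℝ) 1,
      𝔨.orthogonalProjectionOnto (u t) = 𝔨.orthogonalProjectionOnto (u 0) := by
  -- Step 1: for k ∈ 𝔨, ⟪u t, k⟫ is constant in t.
  have hconst : ∀ k ∈ 𝔨, ∀ t : ℝ, ⟪u t, k⟫_ℝ = ⟪u 0, k⟫_ℝ := by
    intro k hk t
    have hdiff : Differentiable ℝ (fun t => ⟪u t, k⟫_ℝ) := fun s =>
      ((hu s).hasDerivAt.inner ℝ (hasDerivAt_const s k)).differentiableAt
    have hderiv : ∀ s : ℝ, deriv (fun t => ⟪u t, k⟫_ℝ) s = 0 := by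
      intro s
      have h1 : HasDerivAt (fun t => ⟪u t, k⟫_ℝ)
          (⟪u s, (0:V)⟫_ℝ + ⟪deriv u s, k⟫_ℝ) s :=
        (hu s).hasDerivAt.inner ℝ (hasDerivAt_const s k)
      have h2 := h1.deriv
      rw [h2, inner_zero_right, zero_add, heuler s k]
      -- ⟪u s, bracket (u s) k⟫ = -⟪u s, bracket k (u s)⟫ = ⟪bracket k (u s), u s⟫
      rw [hskew (u s) k, inner_neg_right]
      have := hinv k hk (u s) (u s)
      -- ⟪bracket k (u s), u s⟫ = -⟪u s, bracket k (u s)⟫, and by symmetry they are equal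
      have hsym : ⟪bracket k (u s), u s⟫_ℝ = ⟪u s, bracket k (u s)⟫_ℝ :=
        real_inner_comm _ _
      linarith [this, hsym]
    have := is_const_of_deriv_eq_zero hdiff hderiv t 0
    simpa using this
  intro t _
  -- u t - u 0 ⊥ 𝔨
  have hperp : u t - u 0 ∈ 𝔨ᗮ := by
    intro k hk
    have h := hconst k hk t
    have : ⟪u t - u 0, k⟫_ℝ = 0 := by rw [inner_sub_left]; linarith
    rw [real_inner_comm] at this
    exact this
  have := Submodule.orthogonalProjectionOnto_apply_of_mem_orthogonal hperp
  have h2 : 𝔨.orthogonalProjectionOnto (u t) - 𝔨.orthogonalProjectionOnto (u 0) = 0 := by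
    rw [← map_sub]; exact this
  exact sub_eq_zero.mp h2
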